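/- arXiv:1004.1883 — 3 statements merged into one kernel-verified Lean document; each statement's English description precedes it below -/
import Mathlib

section
/- Let (φ_k)_{k≥0} be a sequence of real numbers with φ_0 > 0, let ρ : {1,2,3,…} → ℝ be a weight function, and let F(z) = ∑_{n≥1} ( ∑_{T plane tree, |T|=n} w_deg(T)·w_h(T) ) z^n be the formal power series over ℝ whose n-th coefficient is the total degree-and-hook weight of all plane trees of size n. Then for every n ≥ 1, the coefficient of z^n in F equals ρ(n) times the coefficient of z^{n-1} in φ(F(z)), where φ(t) = ∑_{k≥0} φ_k t^k; i.e. [z^n]F(z) = ρ(n)·[z^{n-1}]φ(F(z)). -/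
/-- A plane tree (ordered rooted tree): a root together with a finite
sequence of plane trees (its root subtrees). -/
inductive PlaneTree : Type where
  | node : List PlaneTree → PlaneTree

namespace PlaneTree

/-- The size of a plane tree: its number of vertices. -/
def size : PlaneTree → ℕ
  | node ts => 1 + (ts.attach.map fun t => size t.1).sum
decreasing_by simp only [PlaneTree.node.sizeOf_spec]; have := List.sizeOf_lt_of_mem t.2; omega

/-- The degree weight `w_deg(T) = ∏_{v ∈ T} φ_{d(v)}`, where `d(v)` is the
out-degree of the vertex `v`. -/
noncomputable def degWeight (φ : ℕ → ℝ) : PlaneTree → ℝ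
  | node ts => φ ts.length * (ts.attach.map fun t => degWeight φ t.1).prod
decreasing_by simp only [PlaneTree.node.sizeOf_spec]; have := List.sizeOf_lt_of_mem t.2; omega

/-- The hook weight `w_h(T) = ∏_{v ∈ T} ρ(h_v)`, where the hook length `h_v`
is the number of vertices of the subtree of `T` rooted at `v`. -/
noncomputable def hookWeight (ρ : ℕ → ℝ) : PlaneTree → ℝ
  | node ts => ρ (size (node ts)) * (ts.attach.map fun t => hookWeight ρ t.1).prod
decreasing_by simp only [PlaneTree.node.sizeOf_spec]; have := List.sizeOf_lt_of_mem t.2; omega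

end PlaneTree

namespace PlaneTree

lemma size_node (ts : List PlaneTree) :
    size (node ts) = 1 + (ts.map size).sum := by
  rw [size, List.attach_map_val]

lemma degWeight_node (φ : ℕ → ℝ) (ts : List PlaneTree) :
    degWeight φ (node ts) = φ ts.length * (ts.map (degWeight φ)).prod := by
  rw [degWeight, List.attach_map_val]

lemma hookWeight_node (ρ : ℕ → ℝ) (ts : List PlaneTree) :
    hookWeight ρ (node ts) = ρ (size (node ts)) * (ts.map (hookWeight ρ)).prod := by
  rw [hookWeight, List.attach_map_val]

lemma one_le_size (T : PlaneTree) : 1 ≤ T.size := by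
  cases T with
  | node ts => rw [size_node]; omega

/-- The list of root subtrees. -/
def children : PlaneTree → List PlaneTree
  | node ts => ts

@[simp] lemma children_node (ts : List PlaneTree) : children (node ts) = ts := rfl

@[simp] lemma node_children (T : PlaneTree) : node (children T) = T := by cases T; rfl

lemma length_le_sum_sizes (l : List PlaneTree) : l.length ≤ (l.map size).sum := by
  induction l with
  | nil => simp
  | cons h t ih => have := one_le_size h; simp only [List.map_cons, List.sum_cons,
      List.length_cons]; omega

lemma size_le_sum_sizes {t : PlaneTree} {l : List PlaneTree} (h : t ∈ l) :
    t.size ≤ (l.map size).sum := by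
  induction l with
  | nil => simp at h
  | cons a l ih =>
    rcases List.mem_cons.mp h with rfl | h'
    · simp only [List.map_cons, List.sum_cons]; omega
    · have := ih h'; simp only [List.map_cons, List.sum_cons]; omega

theorem finite_size_le (n : ℕ) : Finite {T : PlaneTree // T.size ≤ n} := by
  induction n with
  | zero =>
    have : IsEmpty {T : PlaneTree // T.size ≤ 0} :=
      ⟨fun T => by have := one_le_size T.1; omega⟩
    infer_instance
  | succ n ih =>
    haveI := ih
    haveI : Finite {l : List {T : PlaneTree // T.size ≤ n} // l.length ≤ n} :=
      (List.finite_length_le {T : PlaneTree // T.size ≤ n} n).to_subtype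
    have key : ∀ T : PlaneTree, T.size ≤ n + 1 → ∀ t ∈ children T, t.size ≤ n := by
      intro T hT t ht
      have h1 := size_le_sum_sizes ht
      have h2 : T.size = 1 + ((children T).map size).sum := by
        conv_lhs => rw [← node_children T]
        rw [size_node]
      omega
    have keylen : ∀ T : PlaneTree, T.size ≤ n + 1 → (children T).length ≤ n := by
      intro T hT
      have h1 := length_le_sum_sizes (children T)
      have h2 : T.size = 1 + ((children T).map size).sum := by
        conv_lhs => rw [← node_children T]
        rw [size_node]
      omega
    refine Finite.of_injective
      (fun T => (⟨(children T.1).attach.map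
          (fun t => ⟨t.1, key T.1 T.2 t.1 t.2⟩),
          by simpa using keylen T.1 T.2⟩ :
        {l : List {T : PlaneTree // T.size ≤ n} // l.length ≤ n})) ?_
    intro T S h
    have h' := congrArg (fun l => l.1.map Subtype.val) h
    simp only [List.map_map, Function.comp_def, List.attach_map_subtype_val] at h'
    have h'' : (T.1 : PlaneTree).children = (S.1 : PlaneTree).children := by
      simpa using h'
    apply Subtype.ext
    rw [← node_children T.1, ← node_children S.1, h'']

instance (n : ℕ) : Finite {T : PlaneTree // T.size = n} := by
  haveI := finite_size_le n
  refine Finite.of_injective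
    (fun T => (⟨T.1, T.2.le⟩ : {T : PlaneTree // T.size ≤ n})) ?_
  intro a b h
  simp only [Subtype.mk.injEq] at h
  exact Subtype.ext h

noncomputable instance (n : ℕ) : Fintype {T : PlaneTree // T.size = n} :=
  Fintype.ofFinite _

instance (k m : ℕ) : Finite {f : Fin k → PlaneTree // ∑ i, (f i).size = m} := by
  haveI := finite_size_le m
  refine Finite.of_injective
    (fun f (i : Fin k) => (⟨f.1 i, ?_⟩ : {T : PlaneTree // T.size ≤ m})) ?_
  · calc (f.1 i).size ≤ ∑ j, (f.1 j).size :=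
        Finset.single_le_sum (f := fun j => (f.1 j).size)
          (fun j _ => Nat.zero_le _) (Finset.mem_univ i)
    _ = m := f.2
  · intro a b h
    apply Subtype.ext; funext i
    exact congrArg Subtype.val (congrFun h i)

noncomputable instance (k m : ℕ) :
    Fintype {f : Fin k → PlaneTree // ∑ i, (f i).size = m} := Fintype.ofFinite _

lemma list_sum_eq {M : Type*} [AddCommMonoid M] (l : List PlaneTree) (g : PlaneTree → M) :
    (l.map g).sum = ∑ i : Fin l.length, g (l.get i) := by
  conv_lhs => rw [← List.ofFn_get l]
  rw [List.map_ofFn, List.sum_ofFn]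
  rfl

lemma list_prod_eq {M : Type*} [CommMonoid M] (l : List PlaneTree) (g : PlaneTree → M) :
    (l.map g).prod = ∏ i : Fin l.length, g (l.get i) := by
  conv_lhs => rw [← List.ofFn_get l]
  rw [List.map_ofFn, List.prod_ofFn]
  rfl

/-- Turn a list of known length into a tuple. -/
def toTuple (l : List PlaneTree) (k : ℕ) (h : l.length = k) : Fin k → PlaneTree :=
  fun i => l.get (Fin.cast h.symm i)

lemma toTuple_eq_get (l : List PlaneTree) (h : l.length = l.length) :
    toTuple l l.length h = l.get := by
  funext i
  show l.get _ = l.get i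
  congr 1

lemma ofFn_toTuple (l : List PlaneTree) (k : ℕ) (h : l.length = k) :
    List.ofFn (toTuple l k h) = l := by
  subst h
  rw [toTuple_eq_get]
  exact List.ofFn_get l

lemma toTuple_ofFn (k : ℕ) (f : Fin k → PlaneTree) (h : (List.ofFn f).length = k) :
    toTuple (List.ofFn f) k h = f := by
  funext i
  show (List.ofFn f).get _ = f i
  rw [List.get_ofFn]
  congr 1

lemma sum_toTuple {M : Type*} [AddCommMonoid M] (l : List PlaneTree) (k : ℕ)
    (h : l.length = k) (g : PlaneTree → M) :
    ∑ i : Fin k, g (toTuple l k h i) = (l.map g).sum := by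
  subst h
  rw [list_sum_eq, toTuple_eq_get]

lemma prod_toTuple {M : Type*} [CommMonoid M] (l : List PlaneTree) (k : ℕ)
    (h : l.length = k) (g : PlaneTree → M) :
    ∏ i : Fin k, g (toTuple l k h i) = (l.map g).prod := by
  subst h
  rw [list_prod_eq, toTuple_eq_get]

end PlaneTree
namespace PlaneTree

/-- Combined weight. -/
noncomputable def wt (φ ρ : ℕ → ℝ) (T : PlaneTree) : ℝ :=
  T.degWeight φ * T.hookWeight ρ

lemma wt_node (φ ρ : ℕ → ℝ) {s : ℕ} {ts : List PlaneTree}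
    (hs : size (node ts) = s) :
    wt φ ρ (node ts) = ρ s * (φ ts.length * (ts.map (wt φ ρ)).prod) := by
  have h : ts.map (wt φ ρ) = ts.map (fun t => degWeight φ t * hookWeight ρ t) := rfl
  rw [wt, degWeight_node, hookWeight_node, hs, h, List.prod_map_mul]
  ring

lemma coeff_pow_eq (φ ρ : ℕ → ℝ) (F : PowerSeries ℝ)
    (hc : ∀ j : ℕ, (PowerSeries.coeff (R := ℝ) j) F
        = ∑ T : {T : PlaneTree // T.size = j}, wt φ ρ T.1) :
    ∀ (k j : ℕ), (PowerSeries.coeff (R := ℝ) j) (F ^ k)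
      = ∑ f : {f : Fin k → PlaneTree // ∑ i, (f i).size = j},
          ∏ i, wt φ ρ (f.1 i) := by
  intro k
  induction k with
  | zero =>
    intro j
    rw [pow_zero, PowerSeries.coeff_one]
    rcases eq_or_ne j 0 with rfl | hj
    · haveI : Unique {f : Fin 0 → PlaneTree // ∑ i, (f i).size = 0} :=
        { default := ⟨fun i => i.elim0, by simp⟩
          uniq := fun f => Subtype.ext (funext fun i => i.elim0) }
      simp
    · haveI : IsEmpty {f : Fin 0 → PlaneTree // ∑ i, (f i).size = j} :=
        ⟨fun f => hj (by simpa using f.2.symm)⟩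
      simp [hj]
  | succ k ih =>
    intro j
    rw [pow_succ', PowerSeries.coeff_mul]
    have step : ∀ p ∈ Finset.HasAntidiagonal.antidiagonal j,
        (PowerSeries.coeff (R := ℝ) p.1) F * (PowerSeries.coeff (R := ℝ) p.2) (F ^ k)
          = ∑ q : {T : PlaneTree // T.size = p.1} ×
              {f : Fin k → PlaneTree // ∑ i, (f i).size = p.2},
              wt φ ρ q.1.1 * ∏ i, wt φ ρ (q.2.1 i) := by
      intro p _
      rw [hc, ih, Fintype.sum_mul_sum]
      exact (Fintype.sum_prod_type
        (f := fun q : {T : PlaneTree // T.size = p.1} ×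
            {f : Fin k → PlaneTree // ∑ i, (f i).size = p.2} =>
          wt φ ρ q.1.1 * ∏ i, wt φ ρ (q.2.1 i))).symm
    rw [Finset.sum_congr rfl step]
    have maps : ∀ f ∈ (Finset.univ :
        Finset {f : Fin (k+1) → PlaneTree // ∑ i, (f i).size = j}),
        ((f.1 0).size, j - (f.1 0).size) ∈ Finset.HasAntidiagonal.antidiagonal j := by
      intro f _
      have hle : (f.1 0).size ≤ j := by
        have h := Finset.single_le_sum (f := fun i => (f.1 i).size)
          (fun i _ => Nat.zero_le _) (Finset.mem_univ 0)
        rwa [f.2] at h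
      rw [Finset.HasAntidiagonal.mem_antidiagonal]
      omega
    rw [← Finset.sum_fiberwise_of_maps_to maps (fun f => ∏ i, wt φ ρ (f.1 i))]
    refine Finset.sum_congr rfl ?_
    intro p hp
    rw [Finset.HasAntidiagonal.mem_antidiagonal] at hp
    refine Finset.sum_bij'
      (fun (q : {T : PlaneTree // T.size = p.1} ×
          {f : Fin k → PlaneTree // ∑ i, (f i).size = p.2}) _ =>
        (⟨Fin.cons q.1.1 q.2.1, ?hcons⟩ :
          {f : Fin (k+1) → PlaneTree // ∑ i, (f i).size = j}))
      (fun f hf => (⟨f.1 0, ?hfst⟩, ⟨Fin.tail f.1, ?hsnd⟩))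
      ?hi ?hj ?hleft ?hright ?hval
    case hcons =>
      rw [Fin.sum_univ_succ]
      simp only [Fin.cons_zero, Fin.cons_succ]
      rw [q.1.2, q.2.2, hp]
    case hfst =>
      exact congrArg Prod.fst (Finset.mem_filter.mp hf).2
    case hsnd =>
      have h1 := (Finset.mem_filter.mp hf).2
      have h2 : (f.1 0).size = p.1 := congrArg Prod.fst h1
      have h3 : j - (f.1 0).size = p.2 := congrArg Prod.snd h1
      have h4 := f.2
      rw [Fin.sum_univ_succ] at h4
      have h5 : ∑ i : Fin k, (Fin.tail f.1 i).size
          = ∑ i : Fin k, (f.1 i.succ).size := rfl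
      rw [h5]
      omega
    case hi =>
      intro q _
      rw [Finset.mem_filter]
      refine ⟨Finset.mem_univ _, ?_⟩
      simp only [Fin.cons_zero]
      rw [q.1.2]
      have : j - p.1 = p.2 := by omega
      rw [this]
    case hj =>
      intro f _
      exact Finset.mem_univ _
    case hleft =>
      intro q _
      refine Prod.ext (Subtype.ext ?_) (Subtype.ext ?_) <;> simp
    case hright =>
      intro f _
      exact Subtype.ext (Fin.cons_self_tail f.1)
    case hval =>
      intro q _
      rw [Fin.prod_univ_succ]
      simp only [Fin.cons_zero, Fin.cons_succ]

lemma toTuple_eq_ofFn {l : List PlaneTree} {k : ℕ} (f : Fin k → PlaneTree)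
    (hl : l = List.ofFn f) (h : l.length = k) : toTuple l k h = f := by
  subst hl
  exact toTuple_ofFn k f h

lemma tree_sum_eq (φ ρ : ℕ → ℝ) (m : ℕ) :
    ∑ T : {T : PlaneTree // T.size = m + 1}, wt φ ρ T.1
      = ρ (m + 1) * ∑ k ∈ Finset.range (m + 1), φ k *
          ∑ f : {f : Fin k → PlaneTree // ∑ i, (f i).size = m},
            ∏ i, wt φ ρ (f.1 i) := by
  have hsz : ∀ T : {T : PlaneTree // T.size = m + 1},
      ((children T.1).map size).sum = m := by
    intro T
    have h2 : T.1.size = 1 + ((children T.1).map size).sum := by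
      conv_lhs => rw [← node_children T.1]
      rw [size_node]
    have h3 := T.2
    omega
  have hW : ∀ T : {T : PlaneTree // T.size = m + 1},
      wt φ ρ T.1 = ρ (m + 1) *
        (φ (children T.1).length * (((children T.1).map (wt φ ρ)).prod)) := by
    intro T
    conv_lhs => rw [← node_children T.1]
    exact wt_node φ ρ (by rw [node_children]; exact T.2)
  rw [Finset.sum_congr rfl (fun T _ => hW T), ← Finset.mul_sum]
  congr 1
  have maps : ∀ T ∈ (Finset.univ : Finset {T : PlaneTree // T.size = m + 1}),
      (children T.1).length ∈ Finset.range (m + 1) := by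
    intro T _
    have h1 := length_le_sum_sizes (children T.1)
    rw [hsz T] at h1
    rw [Finset.mem_range]
    omega
  rw [← Finset.sum_fiberwise_of_maps_to maps
    (fun T => φ (children T.1).length * (((children T.1).map (wt φ ρ)).prod))]
  refine Finset.sum_congr rfl ?_
  intro k hk
  rw [Finset.mul_sum]
  refine (Finset.sum_bij'
    (fun T hT => (⟨toTuple (children T.1) k ?hlen, ?htup⟩ :
      {f : Fin k → PlaneTree // ∑ i, (f i).size = m}))
    (fun f _ => (⟨node (List.ofFn f.1), ?hnode⟩ :
      {T : PlaneTree // T.size = m + 1}))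
    ?hi' ?hj' ?hleft' ?hright' ?hval')
  case hlen =>
    exact (Finset.mem_filter.mp hT).2
  case htup =>
    rw [sum_toTuple]
    exact hsz T
  case hnode =>
    rw [size_node, List.map_ofFn, List.sum_ofFn]
    have : ∑ i, ((f.1 i).size) = m := f.2
    rw [show (∑ i, (size ∘ f.1) i) = ∑ i, (f.1 i).size from rfl, this]
    omega
  case hi' =>
    intro T _
    exact Finset.mem_univ _
  case hj' =>
    intro f _
    rw [Finset.mem_filter]
    refine ⟨Finset.mem_univ _, ?_⟩
    simp only [children_node]
    exact List.length_ofFn (f := f.1)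
  case hleft' =>
    intro T hT
    apply Subtype.ext
    dsimp only
    rw [ofFn_toTuple, node_children]
  case hright' =>
    intro f hf
    apply Subtype.ext
    dsimp only
    exact toTuple_eq_ofFn f.1 (children_node _) _
  case hval' =>
    intro T hT
    have hlen : (children T.1).length = k := (Finset.mem_filter.mp hT).2
    dsimp only
    conv_lhs => rw [hlen]
    rw [prod_toTuple]

end PlaneTree
/-- Composition `∑_{k ≥ 0} c_k F^k` of a coefficient sequence `c` with a formal
power series `F` having zero constant term: since `F^k` has order `≥ k`, the
`n`-th coefficient only involves `k ≤ n`. -/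
noncomputable def seriesComp (c : ℕ → ℝ) (F : PowerSeries ℝ) : PowerSeries ℝ :=
  PowerSeries.mk fun n => ∑ k ∈ Finset.range (n + 1), c k * (PowerSeries.coeff (R := ℝ) n) (F ^ k)

/-- **Hook length formula for simply generated (weighted plane) trees.**
If `F(z) = ∑_{n≥1} (∑_{|T|=n} w_deg(T) w_h(T)) zⁿ`, then for all `n ≥ 1`,
`[zⁿ]F(z) = ρ(n) · [z^{n-1}] φ(F(z))`. -/
theorem hook_length_simply_generated
    (φ : ℕ → ℝ) (hφ : 0 < φ 0) (ρ : ℕ → ℝ)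
    (F : PowerSeries ℝ)
    (hF : F = PowerSeries.mk fun n =>
      ∑' T : {T : PlaneTree // T.size = n}, T.1.degWeight φ * T.1.hookWeight ρ)
    (n : ℕ) (hn : 1 ≤ n) :
    (PowerSeries.coeff (R := ℝ) n) F = ρ n * (PowerSeries.coeff (R := ℝ) (n - 1)) (seriesComp φ F) := by
  have hc : ∀ j : ℕ, (PowerSeries.coeff (R := ℝ) j) F
      = ∑ T : {T : PlaneTree // T.size = j}, PlaneTree.wt φ ρ T.1 := by
    intro j
    rw [hF, PowerSeries.coeff_mk]
    exact tsum_fintype _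
  obtain ⟨m, rfl⟩ : ∃ m, n = m + 1 := ⟨n - 1, by omega⟩
  rw [hc, PlaneTree.tree_sum_eq φ ρ m]
  congr 1
  rw [seriesComp, PowerSeries.coeff_mk]
  simp only [Nat.add_sub_cancel]
  refine Finset.sum_congr rfl fun k _ => ?_
  rw [PlaneTree.coeff_pow_eq φ ρ F hc]
end

section
/- Let ρ : {1,2,3,…} → ℝ and let F(z) = ∑_{n≥1} ( ∑_{T binary tree with n vertices} ∏_{v∈T} ρ(h_v) ) z^n be the formal power series over ℝ whose n-th coefficient is the total hook weight of all binary trees with n vertices. Then for every n ≥ 1, [z^n]F(z) = ρ(n)·[z^{n-1}](1 + F(z))^2. -/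
/-- A binary tree: either empty, or a root vertex with a left and right binary subtree. -/
inductive BinTree : Type where
  | empty : BinTree
  | node : BinTree → BinTree → BinTree

namespace BinTree

/-- The size of a binary tree: its number of vertices. -/
def size : BinTree → ℕ
  | empty => 0
  | node l r => 1 + l.size + r.size

/-- The hook weight `w_h(T) = ∏_{v ∈ T} ρ(h_v)`, where the hook length `h_v`
is the number of vertices of the subtree rooted at `v` (empty product for the
empty tree). -/
noncomputable def hookWeight (ρ : ℕ → ℝ) : BinTree → ℝ
  | empty => 1
  | node l r => ρ (size (node l r)) * hookWeight ρ l * hookWeight ρ r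

end BinTree

open BinTree

lemma size_eq_zero {T : BinTree} (h : T.size = 0) : T = BinTree.empty := by
  cases T with
  | empty => rfl
  | node l r => simp [BinTree.size] at h

instance : Unique {T : BinTree // T.size = 0} where
  default := ⟨.empty, rfl⟩
  uniq a := Subtype.ext (size_eq_zero a.2)

/-- A binary tree of size `m + 1` is a root together with a left subtree of
size `k ≤ m` and a right subtree of size `m - k`. -/
def splitEquiv (m : ℕ) :
    (Σ k : Fin (m+1), {T : BinTree // T.size = (k:ℕ)} × {T : BinTree // T.size = m - (k:ℕ)}) ≃
    {T : BinTree // T.size = m + 1} where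
  toFun x := ⟨.node x.2.1.1 x.2.2.1, by
    have h1 := x.2.1.2; have h2 := x.2.2.2; have h3 := x.1.isLt
    simp only [BinTree.size, h1, h2]; omega⟩
  invFun := fun ⟨T, hT⟩ =>
    match T, hT with
    | .empty, hT => absurd hT (by simp [BinTree.size])
    | .node l r, hT =>
      ⟨⟨l.size, by simp only [BinTree.size] at hT; omega⟩, ⟨l, rfl⟩,
        ⟨r, by show r.size = m - l.size; simp only [BinTree.size] at hT; omega⟩⟩
  left_inv := by
    rintro ⟨⟨k, hk⟩, ⟨l, hl⟩, ⟨r, hr⟩⟩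
    dsimp at hl
    subst hl
    rfl
  right_inv := by
    rintro ⟨T, hT⟩
    cases T with
    | empty => simp [BinTree.size] at hT
    | node l r => rfl

lemma finite_size : ∀ n, Finite {T : BinTree // T.size = n} := by
  intro n
  induction n using Nat.strong_induction_on with
  | _ n ih =>
    match n with
    | 0 => infer_instance
    | m + 1 =>
      haveI : ∀ k : Fin (m+1), Finite {T : BinTree // T.size = (k:ℕ)} :=
        fun k => ih k k.isLt
      haveI : ∀ k : Fin (m+1), Finite {T : BinTree // T.size = m - (k:ℕ)} :=
        fun k => ih _ (Nat.lt_succ_of_le (Nat.sub_le _ _))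
      exact Finite.of_equiv _ (splitEquiv m)

instance (n : ℕ) : Finite {T : BinTree // T.size = n} := finite_size n

/-- The total hook weight of all binary trees with `n` vertices. -/
noncomputable def S (ρ : ℕ → ℝ) (n : ℕ) : ℝ :=
  ∑' T : {T : BinTree // T.size = n}, T.1.hookWeight ρ

lemma S_zero (ρ : ℕ → ℝ) : S ρ 0 = 1 := by
  rw [S, tsum_eq_single (⟨.empty, rfl⟩ : {T : BinTree // T.size = 0})
    (fun b hb => absurd (Subsingleton.elim b _) hb)]
  rfl

lemma S_succ (ρ : ℕ → ℝ) (m : ℕ) :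
    S ρ (m+1) = ρ (m+1) * ∑ k ∈ Finset.range (m+1), S ρ k * S ρ (m - k) := by
  classical
  haveI : ∀ k : Fin (m+1), Fintype {T : BinTree // T.size = (k:ℕ)} :=
    fun _ => Fintype.ofFinite _
  haveI : ∀ k : Fin (m+1), Fintype {T : BinTree // T.size = m - (k:ℕ)} :=
    fun _ => Fintype.ofFinite _
  haveI : ∀ n : ℕ, Fintype {T : BinTree // T.size = n} := fun _ => Fintype.ofFinite _
  have key : ∀ x : (Σ k : Fin (m+1),
      {T : BinTree // T.size = (k:ℕ)} × {T : BinTree // T.size = m - (k:ℕ)}),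
      ((splitEquiv m) x).1.hookWeight ρ
        = ρ (m+1) * x.2.1.1.hookWeight ρ * x.2.2.1.hookWeight ρ := by
    rintro ⟨⟨k, hk⟩, ⟨l, hl⟩, ⟨r, hr⟩⟩
    simp only [splitEquiv, Equiv.coe_fn_mk, hookWeight]
    have : size (BinTree.node l r) = m + 1 := by simp only [BinTree.size]; omega
    rw [this]
  rw [S, ← (splitEquiv m).tsum_eq, tsum_congr key, tsum_fintype,
    ← Finset.univ_sigma_univ, Finset.sum_sigma]
  simp only [Fintype.sum_prod_type]
  rw [Fin.sum_univ_eq_sum_range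
    (fun k => ∑ l : {T : BinTree // T.size = k}, ∑ r : {T : BinTree // T.size = m - k},
      ρ (m+1) * l.1.hookWeight ρ * r.1.hookWeight ρ)]
  rw [Finset.mul_sum]
  refine Finset.sum_congr rfl fun k _ => ?_
  rw [S, S, tsum_fintype, tsum_fintype, Finset.sum_mul_sum]
  rw [Finset.mul_sum]
  refine Finset.sum_congr rfl fun l _ => ?_
  rw [Finset.mul_sum]
  exact Finset.sum_congr rfl fun r _ => by ring

/-- **Han's hook length formula for binary trees.**
If `F(z) = ∑_{n≥1} (∑_{T binary, |T|=n} ∏_{v∈T} ρ(h_v)) zⁿ`, then for all `n ≥ 1`,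
`[zⁿ]F(z) = ρ(n) · [z^{n-1}] (1 + F(z))²`. -/
theorem hook_length_binary_trees
    (ρ : ℕ → ℝ) (F : PowerSeries ℝ)
    (hF : F = PowerSeries.mk fun n =>
      if n = 0 then 0 else ∑' T : {T : BinTree // T.size = n}, T.1.hookWeight ρ)
    (n : ℕ) (hn : 1 ≤ n) :
    (PowerSeries.coeff (R := ℝ) n) F = ρ n * (PowerSeries.coeff (R := ℝ) (n - 1)) ((1 + F) ^ 2) := by
  have hS : ∀ k, PowerSeries.coeff (R := ℝ) k (1 + F) = S ρ k := by
    intro k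
    rw [map_add, hF, PowerSeries.coeff_mk, PowerSeries.coeff_one]
    cases k with
    | zero => simp [S_zero]
    | succ k => simp [S]
  obtain ⟨m, rfl⟩ : ∃ m, n = m + 1 := ⟨n - 1, (Nat.succ_pred_eq_of_pos hn).symm⟩
  have hl : PowerSeries.coeff (R := ℝ) (m+1) F = S ρ (m+1) := by
    rw [hF, PowerSeries.coeff_mk]; simp [S]
  rw [hl, S_succ, Nat.add_sub_cancel, sq, PowerSeries.coeff_mul,
    Finset.Nat.sum_antidiagonal_eq_sum_range_succ_mk]
  congr 1
  exact Finset.sum_congr rfl fun k _ => by rw [hS, hS]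
end

section
/- Let α > 0 be a real number. Then for every n ≥ 1, ∑_{T plane tree, |T|=n} ( ∏_{v∈T} C(α−1+d(v), d(v)) ) · ( n! / ∏_{v∈T} h_v ) = (α+1)^{n-1} · (n−1)! · C(n−1−1/(α+1), n−1), where C(x,k) = x(x−1)⋯(x−k+1)/k! denotes the generalized binomial coefficient for real x and natural k. -/
namespace PlaneTree

/-- The product `∏_{v ∈ T} h_v` of all hook lengths of a plane tree. -/
def hookProd : PlaneTree → ℕ
  | node ts => size (node ts) * (ts.attach.map fun t => hookProd t.1).prod
decreasing_by simp only [PlaneTree.node.sizeOf_spec]; have := List.sizeOf_lt_of_mem t.2; omega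

end PlaneTree

/-- The generalized binomial coefficient `C(x,k) = x(x−1)⋯(x−k+1)/k!` for real `x`. -/
noncomputable def genBinom (x : ℝ) (k : ℕ) : ℝ :=
  (∏ i ∈ Finset.range k, (x - i)) / Nat.factorial k


open PowerSeries

namespace HLI
open PlaneTree

/-! ### Basic structural lemmas -/

lemma size_node (ts : List PlaneTree) : (node ts).size = 1 + (ts.map size).sum := by
  rw [size]; congr 1; congr 1; exact List.attach_map_val (f := size)

lemma degWeight_node (φ : ℕ → ℝ) (ts : List PlaneTree) :
    (node ts).degWeight φ = φ ts.length * (ts.map (degWeight φ)).prod := by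
  rw [degWeight]; congr 2; exact List.attach_map_val (f := degWeight φ)

lemma hookProd_node (ts : List PlaneTree) :
    (node ts).hookProd = (node ts).size * (ts.map hookProd).prod := by
  rw [hookProd]; congr 2; exact List.attach_map_val (f := hookProd)

lemma size_pos (T : PlaneTree) : 1 ≤ T.size := by
  cases T with | node ts => rw [size_node]; omega

lemma length_le_sum (ts : List PlaneTree) : ts.length ≤ (ts.map size).sum := by
  induction ts with
  | nil => simp
  | cons h t ih => have := size_pos h; simp only [List.map_cons, List.sum_cons,
      List.length_cons]; omega

lemma mem_size_le {t : PlaneTree} {ts : List PlaneTree} (ht : t ∈ ts) :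
    t.size ≤ (ts.map size).sum :=
  List.le_sum_of_mem (List.mem_map_of_mem ht)

/-! ### Finiteness -/

lemma finite_lists {s : Set PlaneTree} (hs : s.Finite) (n : ℕ) :
    {ts : List PlaneTree | ts.length ≤ n ∧ ∀ t ∈ ts, t ∈ s}.Finite := by
  haveI := hs.to_subtype
  refine ((List.finite_length_le {x // x ∈ s} n).image (List.map Subtype.val)).subset ?_
  rintro ts ⟨hlen, hmem⟩
  refine ⟨ts.attach.map (fun t => ⟨t.1, hmem _ t.2⟩), by simpa using hlen, ?_⟩
  simp [List.map_map]

lemma finite_size_le : ∀ n, {T : PlaneTree | T.size ≤ n}.Finite := by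
  intro n
  induction n with
  | zero =>
    convert Set.finite_empty
    ext T; simp only [Set.mem_setOf_eq, Set.mem_empty_iff_false, iff_false]
    have := size_pos T; omega
  | succ n ih =>
    refine ((finite_lists ih n).image node).subset ?_
    rintro T hT
    cases T with | node ts =>
    rw [Set.mem_setOf_eq, size_node] at hT
    exact ⟨ts, ⟨le_trans (length_le_sum ts) (by omega),
      fun t ht => Set.mem_setOf_eq ▸ le_trans (mem_size_le ht) (by omega)⟩, rfl⟩

instance finTree (n : ℕ) : Finite {T : PlaneTree // T.size = n} :=
  ((finite_size_le n).subset (fun _ hT => le_of_eq hT)).to_subtype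

lemma finite_lists_sum (m : ℕ) :
    {ts : List PlaneTree | (ts.map size).sum = m}.Finite := by
  refine (finite_lists (finite_size_le m) m).subset ?_
  rintro ts hts
  rw [Set.mem_setOf_eq] at hts
  exact ⟨hts ▸ length_le_sum ts, fun t ht => Set.mem_setOf_eq ▸ hts ▸ mem_size_le ht⟩

instance finListSum (m : ℕ) : Finite {ts : List PlaneTree // (ts.map size).sum = m} :=
  (finite_lists_sum m).to_subtype

instance finListLenSum (m k : ℕ) :
    Finite {ts : List PlaneTree // ts.length = k ∧ (ts.map size).sum = m} :=
  ((finite_lists_sum m).subset (fun _ hts => hts.2)).to_subtype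

variable (α : ℝ)

/-! ### The weights -/

noncomputable def phi (k : ℕ) : ℝ := genBinom (α - 1 + k) k

lemma phi_zero : phi α 0 = 1 := by simp [phi, genBinom]

lemma prod_shift (x : ℝ) (k : ℕ) :
    ∏ i ∈ Finset.range k, (x + (k - 1 : ℝ) - i) = ∏ i ∈ Finset.range k, (x + i) := by
  rw [← Finset.prod_range_reflect]
  refine Finset.prod_congr rfl fun i hi => ?_
  simp only [Finset.mem_range] at hi
  have h1 : ((k - 1 - i : ℕ) : ℝ) = k - 1 - i := by
    push_cast [Nat.cast_sub (by omega : i ≤ k - 1), Nat.cast_sub (by omega : 1 ≤ k)]; ring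
  rw [h1]; ring

lemma phi_succ (k : ℕ) : (k + 1 : ℝ) * phi α (k + 1) = (α + k) * phi α k := by
  have h1 : phi α (k+1) = (∏ i ∈ Finset.range (k+1), (α + i)) / Nat.factorial (k+1) := by
    rw [phi, genBinom]
    congr 1
    have := prod_shift α (k+1)
    push_cast at this ⊢
    convert this using 2 with i
    ring
  have h2 : phi α k = (∏ i ∈ Finset.range k, (α + i)) / Nat.factorial k := by
    rw [phi, genBinom]
    congr 1
    have := prod_shift α k
    rcases Nat.eq_zero_or_pos k with hk | hk
    · simp [hk]
    push_cast [Nat.cast_sub hk] at this ⊢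
    convert this using 2 with i
    ring
  rw [h1, h2, Finset.prod_range_succ, Nat.factorial_succ]
  have hf : (Nat.factorial k : ℝ) ≠ 0 := Nat.cast_ne_zero.mpr (Nat.factorial_ne_zero k)
  field_simp
  push_cast
  ring

/-! ### The closed-form coefficients and their generating series -/

noncomputable def cc : ℕ → ℝ
  | 0 => 0
  | n + 1 => if n = 0 then 1 else ((α + 1) * n - 1) / (n + 1) * cc n

lemma cc_one : cc α 1 = 1 := by simp [cc]

lemma cc_rec (n : ℕ) (hn : 1 ≤ n) :
    ((n : ℝ) + 1) * cc α (n + 1) = ((α + 1) * n - 1) * cc α n := by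
  rw [cc, if_neg (by omega : ¬ n = 0)]
  have : ((n : ℝ) + 1) ≠ 0 := by positivity
  field_simp

noncomputable def Y : ℝ⟦X⟧ := PowerSeries.mk (cc α)

noncomputable def aa (m k : ℕ) : ℝ := coeff m ((Y α) ^ k)

lemma constantCoeff_Y : constantCoeff (Y α) = 0 := by
  simp [Y, ← coeff_zero_eq_constantCoeff, cc]

lemma aa_eq_zero (m k : ℕ) (h : m < k) : aa α m k = 0 := by
  have hx : (X : ℝ⟦X⟧) ∣ Y α := X_dvd_iff.mpr (constantCoeff_Y α)
  obtain ⟨g, hg⟩ := pow_dvd_pow_of_dvd hx k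
  rw [aa, hg, PowerSeries.coeff_mul]
  apply Finset.sum_eq_zero
  intro p hp
  rw [Finset.HasAntidiagonal.mem_antidiagonal] at hp
  rw [PowerSeries.coeff_X_pow, if_neg (by omega), zero_mul]

lemma ode : (1 - (PowerSeries.C (α+1)) * X) * (d⁄dX ℝ (Y α)) = 1 - Y α := by
  ext m
  rw [sub_mul, one_mul, mul_assoc]
  rcases m with _ | m
  · simp [coeff_zero_eq_constantCoeff, map_sub, map_mul, constantCoeff_X, coeff_derivative,
      Y, cc]
  · rw [map_sub, map_sub, coeff_C_mul, coeff_succ_X_mul, coeff_derivative, coeff_derivative,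
      coeff_one, if_neg (Nat.succ_ne_zero m)]
    simp only [Y, coeff_mk, zero_sub]
    rcases Nat.eq_zero_or_pos m with hm | hm
    · subst hm; norm_num [cc]
    · have := cc_rec α (m+1) (by omega)
      push_cast at this ⊢
      nlinarith [this]

lemma ode_pow (k : ℕ) :
    (1 - (PowerSeries.C (α+1)) * X) * (d⁄dX ℝ ((Y α) ^ (k+1)))
      = (k+1) • ((Y α) ^ k - (Y α) ^ (k+1)) := by
  rw [Derivation.leibniz_pow]
  simp only [smul_eq_mul, Nat.add_sub_cancel]
  rw [mul_smul_comm]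
  congr 1
  rw [mul_left_comm, ode]
  ring

lemma aa_rec (m k : ℕ) :
    ((m:ℝ)+1) * aa α (m+1) (k+1) - (α+1)*m * aa α m (k+1)
      = ((k:ℝ)+1) * (aa α m k - aa α m (k+1)) := by
  have h := congrArg (coeff m) (ode_pow α k)
  rw [sub_mul, one_mul, mul_assoc, map_sub, coeff_C_mul, map_nsmul, map_sub] at h
  rw [coeff_derivative] at h
  rcases m with _ | m
  · have hz : coeff 0 (X * (d⁄dX ℝ (Y α ^ (k+1)))) = 0 := by
      simp [coeff_zero_eq_constantCoeff]
    rw [hz] at h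
    simp only [aa, nsmul_eq_mul, ← coeff_zero_eq_constantCoeff] at h ⊢
    push_cast at h ⊢
    linarith [h]
  · rw [coeff_succ_X_mul, coeff_derivative] at h
    push_cast at h ⊢
    simp only [aa, nsmul_eq_mul] at *
    push_cast at h
    linarith [h]

noncomputable def TT (m : ℕ) : ℝ := ∑ k ∈ Finset.range (m+1), phi α k * aa α m k

lemma aa_zero_right (m : ℕ) : aa α m 0 = if m = 0 then 1 else 0 := by
  simp [aa, coeff_one]

lemma TT_zero : TT α 0 = 1 := by
  simp [TT, aa_zero_right, phi_zero]

lemma TT_rec (m : ℕ) :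
    ((m:ℝ)+1) * TT α (m+1) = ((α+1)*(m+1) - 1) * TT α m := by
  have hm0 : (m:ℝ) * aa α m 0 = 0 := by
    rcases Nat.eq_zero_or_pos m with hm | hm
    · subst hm; simp
    · rw [aa_zero_right, if_neg (by omega)]; ring
  have hsum : ((m:ℝ)+1) * TT α (m+1)
      = ∑ k ∈ Finset.range (m+2), phi α k * (((m:ℝ)+1) * aa α (m+1) k) := by
    rw [TT, Finset.mul_sum]; apply Finset.sum_congr rfl; intros; ring
  rw [hsum, Finset.sum_range_succ']
  have h0 : phi α 0 * (((m:ℝ)+1) * aa α (m+1) 0) = 0 := by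
    rw [aa_zero_right, if_neg (by omega)]; ring
  rw [h0, add_zero]
  have key : ∀ j ∈ Finset.range (m+1),
      phi α (j+1) * (((m:ℝ)+1) * aa α (m+1) (j+1))
        = (α+1)*m * (phi α (j+1) * aa α m (j+1))
          + ((α + j) * (phi α j * aa α m j) - ((j:ℝ)+1) * (phi α (j+1) * aa α m (j+1))) := by
    intro j _
    have h1 := aa_rec α m j
    have h2 := phi_succ α j
    linear_combination phi α (j+1) * h1 + aa α m j * h2
  rw [Finset.sum_congr rfl key, Finset.sum_add_distrib, Finset.sum_sub_distrib]
  have E1 : ∑ j ∈ Finset.range (m+1), phi α (j+1) * aa α m (j+1) = TT α m - aa α m 0 := by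
    have : ∑ k ∈ Finset.range (m+2), phi α k * aa α m k
        = (∑ j ∈ Finset.range (m+1), phi α (j+1) * aa α m (j+1)) + phi α 0 * aa α m 0 :=
      Finset.sum_range_succ' _ _
    rw [Finset.sum_range_succ, aa_eq_zero α m (m+1) (by omega), mul_zero, add_zero] at this
    rw [phi_zero, one_mul] at this
    rw [← TT] at this
    linarith [this]
  have E3 : ∑ j ∈ Finset.range (m+1), ((j:ℝ)+1) * (phi α (j+1) * aa α m (j+1))
      = ∑ j ∈ Finset.range (m+1), (j:ℝ) * (phi α j * aa α m j) := by
    have : ∑ k ∈ Finset.range (m+2), (k:ℝ) * (phi α k * aa α m k)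
        = (∑ j ∈ Finset.range (m+1), ((j:ℝ)+1) * (phi α (j+1) * aa α m (j+1)))
          + (0:ℝ) * (phi α 0 * aa α m 0) := by
      rw [Finset.sum_range_succ']; push_cast; ring_nf
    rw [Finset.sum_range_succ, aa_eq_zero α m (m+1) (by omega)] at this
    rw [zero_mul, add_zero] at this
    simp only [mul_zero] at this
    rw [add_zero] at this
    linarith [this]
  have E2 : ∑ j ∈ Finset.range (m+1), (α + (j:ℝ)) * (phi α j * aa α m j)
      = α * TT α m + ∑ j ∈ Finset.range (m+1), (j:ℝ) * (phi α j * aa α m j) := by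
    rw [TT, Finset.mul_sum, ← Finset.sum_add_distrib]
    apply Finset.sum_congr rfl; intros; ring
  rw [← Finset.mul_sum, E1, E2, E3]
  linear_combination (-(α+1)) * hm0

lemma TT_eq (m : ℕ) : TT α m = ((m:ℝ)+1) * cc α (m+1) := by
  induction m with
  | zero => simp [TT_zero, cc]
  | succ m ih =>
    have h := TT_rec α m
    rw [ih] at h
    have h2 := cc_rec α (m+1) (by omega)
    have hne : ((m:ℝ)+1) ≠ 0 := by positivity
    apply mul_left_cancel₀ hne
    push_cast at h h2 ⊢
    nlinarith [h, h2]

/-! ### Closed form -/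

lemma genBinom_succ (x : ℝ) (k : ℕ) :
    genBinom (x+1) (k+1) * ((k:ℝ)+1) = (x+1) * genBinom x k := by
  rw [genBinom, genBinom, Finset.prod_range_succ']
  have hfac : (Nat.factorial (k+1) : ℝ) = ((k:ℝ)+1) * Nat.factorial k := by
    rw [Nat.factorial_succ]; push_cast; ring
  rw [hfac]
  rw [show (∏ i ∈ Finset.range k, (x + 1 - ((i+1 : ℕ):ℝ))) = ∏ i ∈ Finset.range k, (x - i) from
    Finset.prod_congr rfl (fun i hi => by push_cast; ring)]
  have hk : ((k:ℝ)+1) ≠ 0 := by positivity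
  have hf : (Nat.factorial k : ℝ) ≠ 0 := Nat.cast_ne_zero.mpr (Nat.factorial_ne_zero k)
  field_simp
  ring

lemma closed_form (hα : 0 < α) (n : ℕ) (hn : 1 ≤ n) :
    (Nat.factorial n : ℝ) * cc α n
      = (α+1)^(n-1) * (Nat.factorial (n-1) : ℝ) * genBinom ((n:ℝ) - 1 - 1/(α+1)) (n-1) := by
  induction n with
  | zero => omega
  | succ n ih =>
    rcases Nat.eq_zero_or_pos n with hn0 | hn0
    · subst hn0
      simp [cc, genBinom, Nat.factorial]
    · have ih' := ih hn0
      have hrec := cc_rec α n hn0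
      have ha1 : (α + 1) ≠ 0 := by positivity
      obtain ⟨m, rfl⟩ : ∃ m, n = m + 1 := ⟨n - 1, by omega⟩
      simp only [Nat.add_sub_cancel] at ih' ⊢
      have hgb := genBinom_succ ((m:ℝ) - 1/(α+1)) m
      rw [show (((m+1+1 : ℕ)):ℝ) - 1 - 1/(α+1) = (m:ℝ) - 1/(α+1) + 1 by push_cast; ring]
      rw [show (((m+1 : ℕ)):ℝ) - 1 - 1/(α+1) = (m:ℝ) - 1/(α+1) by push_cast; ring] at ih'
      have hfac2 : (Nat.factorial (m+2) : ℝ) = ((m:ℝ)+2) * Nat.factorial (m+1) := by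
        rw [Nat.factorial_succ]; push_cast; ring
      have hfac1 : (Nat.factorial (m+1) : ℝ) = ((m:ℝ)+1) * Nat.factorial m := by
        rw [Nat.factorial_succ]; push_cast; ring
      have hb : (α+1) * (1/(α+1)) = 1 := by field_simp
      push_cast at hrec
      have hm1 : ((m:ℝ)+1) ≠ 0 := by positivity
      calc (Nat.factorial (m+1+1) : ℝ) * cc α (m+1+1)
          = (Nat.factorial (m+1) : ℝ) * (((m:ℝ)+1+1) * cc α (m+2)) := by
            rw [show (m+1+1) = m+2 from rfl, hfac2]; push_cast; ring
        _ = (Nat.factorial (m+1) : ℝ) * (((α+1)*((m:ℝ)+1) - 1) * cc α (m+1)) := by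
            rw [show ((m:ℝ)+1+1) = ((m:ℝ)+1)+1 by ring]
            congr 1
        _ = ((α+1)*((m:ℝ)+1) - 1) * ((Nat.factorial (m+1) : ℝ) * cc α (m+1)) := by ring
        _ = ((α+1)*((m:ℝ)+1) - 1) *
              ((α+1)^m * (Nat.factorial m : ℝ) * genBinom ((m:ℝ) - 1/(α+1)) m) := by rw [ih']
        _ = (α+1)^(m+1) * (Nat.factorial (m+1) : ℝ) * genBinom ((m:ℝ) - 1/(α+1) + 1) (m+1) := by
            have : genBinom ((m:ℝ) - 1/(α+1) + 1) (m+1)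
                = ((m:ℝ) - 1/(α+1) + 1) * genBinom ((m:ℝ) - 1/(α+1)) m / ((m:ℝ)+1) := by
              field_simp at hgb ⊢
              linarith [hgb]
            rw [this, hfac1]
            have hexp : ((α+1):ℝ)^(m+1) = (α+1)^m * (α+1) := by ring
            rw [hexp]
            field_simp
            ring_nf

/-! ### Sums over trees -/

noncomputable def W (T : PlaneTree) : ℝ := T.degWeight (phi α) / (T.hookProd : ℝ)

lemma list_prod_div (l : List PlaneTree) (f g : PlaneTree → ℝ) :
    (l.map (fun t => f t / g t)).prod = (l.map f).prod / (l.map g).prod := by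
  induction l with
  | nil => simp
  | cons h t ih => simp only [List.map_cons, List.prod_cons, ih, div_mul_div_comm]

lemma W_node (ts : List PlaneTree) :
    W α (node ts) = phi α ts.length * (ts.map (W α)).prod / ((node ts).size : ℝ) := by
  unfold W
  rw [degWeight_node, hookProd_node, list_prod_div]
  have h1 : (((node ts).size * (ts.map hookProd).prod : ℕ) : ℝ)
      = ((node ts).size : ℝ) * (ts.map (fun t => (t.hookProd : ℝ))).prod := by
    push_cast [Nat.cast_list_prod, List.map_map]
    rfl
  rw [h1]
  ring

noncomputable def S (n : ℕ) : ℝ := ∑' T : {T : PlaneTree // T.size = n}, W α T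

noncomputable def L (m k : ℕ) : ℝ :=
  ∑' ts : {ts : List PlaneTree // ts.length = k ∧ (ts.map size).sum = m},
    ((ts.1.map (W α)).prod)

instance : IsEmpty {T : PlaneTree // T.size = 0} :=
  ⟨fun ⟨T, hT⟩ => by have := size_pos T; omega⟩

lemma S_zero : S α 0 = 0 := tsum_empty

lemma L_zero (m : ℕ) : L α m 0 = if m = 0 then 1 else 0 := by
  rcases Nat.eq_zero_or_pos m with hm | hm
  · subst hm
    rw [if_pos rfl, L]
    rw [tsum_eq_single (⟨[], by simp⟩ :
        {ts : List PlaneTree // ts.length = 0 ∧ (ts.map size).sum = 0})]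
    · simp
    · intro b hb
      exact absurd (Subtype.ext (List.length_eq_zero_iff.mp b.2.1)) hb
  · rw [if_neg (by omega), L]
    haveI : IsEmpty {ts : List PlaneTree // ts.length = 0 ∧ (ts.map size).sum = m} := by
      refine ⟨fun ⟨ts, h⟩ => ?_⟩
      have := List.length_eq_zero_iff.mp h.1
      subst this
      simp at h
      omega
    exact tsum_empty

def consEquiv (m k : ℕ) :
    (Σ j : Fin (m+1), {t : PlaneTree // t.size = (j:ℕ)} ×
        {ts : List PlaneTree // ts.length = k ∧ (ts.map size).sum = m - (j:ℕ)}) ≃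
      {ts : List PlaneTree // ts.length = k + 1 ∧ (ts.map size).sum = m} where
  toFun x := ⟨x.2.1.1 :: x.2.2.1, by
    obtain ⟨⟨j, hj⟩, ⟨t, ht⟩, ⟨ts, hlen, hsum⟩⟩ := x
    simp only [List.length_cons, List.map_cons, List.sum_cons]
    simp only [Fin.val_mk] at ht hsum ⊢
    exact ⟨by omega, by omega⟩⟩
  invFun x := match x with
    | ⟨[], h⟩ => absurd h.1 (by simp)
    | ⟨t :: ts, h⟩ =>
      ⟨⟨t.size, by
          have h2 := h.2
          simp only [List.map_cons, List.sum_cons] at h2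
          omega⟩,
        ⟨t, rfl⟩,
        ⟨ts, by
          have h1 := h.1
          have h2 := h.2
          simp only [List.map_cons, List.sum_cons] at h2
          simp only [List.length_cons] at h1
          simp only [Fin.val_mk]
          exact ⟨by omega, by omega⟩⟩⟩
  left_inv := by
    rintro ⟨⟨j, hj⟩, ⟨t, ht⟩, ⟨ts, hlen, hsum⟩⟩
    simp only at ht
    subst ht
    rfl
  right_inv := by
    rintro ⟨ts, h⟩
    match ts, h with
    | t :: ts, h => rfl

lemma L_succ (m k : ℕ) :
    L α m (k+1) = ∑ j ∈ Finset.range (m+1), S α j * L α (m-j) k := by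
  classical
  haveI fT : ∀ j : Fin (m+1), Fintype {t : PlaneTree // t.size = (j:ℕ)} :=
    fun _ => Fintype.ofFinite _
  haveI fL : ∀ j : Fin (m+1),
      Fintype {ts : List PlaneTree // ts.length = k ∧ (ts.map size).sum = m - (j:ℕ)} :=
    fun _ => Fintype.ofFinite _
  rw [L, ← Equiv.tsum_eq (consEquiv m k), tsum_fintype, ← Finset.univ_sigma_univ,
    Finset.sum_sigma]
  have key : ∀ j : Fin (m+1),
      (∑ p : {t : PlaneTree // t.size = (j:ℕ)} ×
          {ts : List PlaneTree // ts.length = k ∧ (ts.map size).sum = m - (j:ℕ)},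
        (((consEquiv m k ⟨j, p⟩).1).map (W α)).prod)
        = S α (j:ℕ) * L α (m - (j:ℕ)) k := by
    intro j
    rw [S, L, tsum_fintype, tsum_fintype, Finset.sum_mul_sum, Fintype.sum_prod_type]
    apply Finset.sum_congr rfl
    intro t _
    apply Finset.sum_congr rfl
    intro ts _
    simp only [consEquiv, Equiv.coe_fn_mk, List.map_cons, List.prod_cons]
  rw [Finset.sum_congr rfl (fun j _ => key j)]
  exact Fin.sum_univ_eq_sum_range (fun j => S α j * L α (m - j) k) (m+1)

def nodeEquiv (n : ℕ) :
    {ts : List PlaneTree // (ts.map size).sum = n} ≃ {T : PlaneTree // T.size = n + 1} where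
  toFun ts := ⟨node ts.1, by rw [size_node, ts.2]; omega⟩
  invFun T := match T with
    | ⟨node ts, h⟩ => ⟨ts, by rw [size_node] at h; omega⟩
  left_inv := by rintro ⟨ts, h⟩; rfl
  right_inv := by rintro ⟨⟨ts⟩, h⟩; rfl

def lenEquiv (m : ℕ) :
    (Σ k : Fin (m+1), {ts : List PlaneTree // ts.length = k ∧ (ts.map size).sum = m}) ≃
      {ts : List PlaneTree // (ts.map size).sum = m} where
  toFun x := ⟨x.2.1, x.2.2.2⟩
  invFun ts := ⟨⟨ts.1.length, by have h1 := length_le_sum ts.1; have h2 := ts.2; omega⟩,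
    ⟨ts.1, rfl, ts.2⟩⟩
  left_inv := by
    rintro ⟨⟨kk, hk⟩, ⟨ts, hlen, hsum⟩⟩
    simp only at hlen
    subst hlen
    rfl
  right_inv := by rintro ⟨ts, h⟩; rfl

lemma root_rec (n : ℕ) :
    ((n:ℝ)+1) * S α (n+1) = ∑ k ∈ Finset.range (n+1), phi α k * L α n k := by
  classical
  rw [S, ← Equiv.tsum_eq (nodeEquiv n), ← tsum_mul_left]
  have hcong : ∀ ts : {ts : List PlaneTree // (ts.map size).sum = n},
      ((n:ℝ)+1) * W α (nodeEquiv n ts).1 = phi α ts.1.length * (ts.1.map (W α)).prod := by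
    rintro ⟨ts, hts⟩
    show ((n:ℝ)+1) * W α (node ts) = _
    rw [W_node]
    have hsz : (((node ts).size : ℕ) : ℝ) = (n : ℝ) + 1 := by
      rw [size_node, hts]; push_cast; ring
    rw [hsz]
    have : ((n:ℝ)+1) ≠ 0 := by positivity
    field_simp
  rw [tsum_congr hcong, ← Equiv.tsum_eq (lenEquiv n)]
  haveI fL : ∀ k : Fin (n+1),
      Fintype {ts : List PlaneTree // ts.length = (k:ℕ) ∧ (ts.map size).sum = n} :=
    fun _ => Fintype.ofFinite _
  rw [tsum_fintype, ← Finset.univ_sigma_univ, Finset.sum_sigma]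
  have key : ∀ k : Fin (n+1),
      (∑ ts : {ts : List PlaneTree // ts.length = (k:ℕ) ∧ (ts.map size).sum = n},
        phi α (lenEquiv n ⟨k, ts⟩).1.length * ((lenEquiv n ⟨k, ts⟩).1.map (W α)).prod)
        = phi α (k:ℕ) * L α n (k:ℕ) := by
    intro k
    rw [L, tsum_fintype, Finset.mul_sum]
    apply Finset.sum_congr rfl
    intro ts _
    simp only [lenEquiv, Equiv.coe_fn_mk]
    rw [ts.2.1]
  rw [Finset.sum_congr rfl (fun k _ => key k)]
  exact Fin.sum_univ_eq_sum_range (fun k => phi α k * L α n k) (n+1)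

/-! ### Identification of `L` with power series coefficients -/

lemma L_eq_aa : ∀ k m, (∀ j, j ≤ m → S α j = cc α j) → L α m k = aa α m k := by
  intro k
  induction k with
  | zero =>
    intro m _
    rw [L_zero, aa_zero_right]
  | succ k ih =>
    intro m hm
    rw [L_succ]
    have : ∀ j ∈ Finset.range (m+1), S α j * L α (m-j) k = cc α j * aa α (m-j) k := by
      intro j hj
      rw [Finset.mem_range] at hj
      rw [hm j (by omega), ih (m-j) (fun j' hj' => hm j' (by omega))]
    rw [Finset.sum_congr rfl this]
    rw [aa, pow_succ', PowerSeries.coeff_mul, Finset.Nat.sum_antidiagonal_eq_sum_range_succ_mk]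
    apply Finset.sum_congr rfl
    intro j hj
    simp only [aa, Y, coeff_mk]

lemma S_eq_cc : ∀ n, S α n = cc α n := by
  intro n
  induction n using Nat.strong_induction_on with
  | _ n ih =>
    rcases n with _ | m
    · rw [S_zero, cc]
    · have h1 : ((m:ℝ)+1) * S α (m+1) = ∑ k ∈ Finset.range (m+1), phi α k * L α m k :=
        root_rec α m
      have h2 : ∀ k ∈ Finset.range (m+1), phi α k * L α m k = phi α k * aa α m k := by
        intro k _
        rw [L_eq_aa α k m (fun j hj => ih j (by omega))]
      rw [Finset.sum_congr rfl h2, ← TT, TT_eq] at h1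
      have hne : ((m:ℝ)+1) ≠ 0 := by positivity
      exact mul_left_cancel₀ hne h1

end HLI

/-- **Hook length identity for `φ(t) = 1/(1−t)^α` increasing trees.** For `α > 0`
and every `n ≥ 1`,
`∑_{|T|=n} (∏_{v∈T} C(α−1+d(v), d(v))) · n!/∏_{v∈T} h_v
  = (α+1)^{n-1}(n−1)! C(n−1−1/(α+1), n−1)`. -/
theorem hook_length_identity_ged
    (α : ℝ) (hα : 0 < α) (n : ℕ) (hn : 1 ≤ n) :
    ∑' T : {T : PlaneTree // T.size = n},
        T.1.degWeight (fun k => genBinom (α - 1 + k) k)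
          * ((Nat.factorial n : ℝ) / (T.1.hookProd : ℝ))
      = (α + 1) ^ (n - 1) * (Nat.factorial (n - 1) : ℝ)
          * genBinom ((n : ℝ) - 1 - 1 / (α + 1)) (n - 1) := by
  classical
  have hW : ∀ T : {T : PlaneTree // T.size = n},
      T.1.degWeight (fun k => genBinom (α - 1 + k) k)
          * ((Nat.factorial n : ℝ) / (T.1.hookProd : ℝ))
        = (Nat.factorial n : ℝ) * HLI.W α T.1 := by
    intro T
    rw [HLI.W]
    show T.1.degWeight (HLI.phi α) * _ = _
    ring
  rw [tsum_congr hW, tsum_mul_left]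
  show (Nat.factorial n : ℝ) * HLI.S α n = _
  rw [HLI.S_eq_cc]
  exact HLI.closed_form α hα n hn
end
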